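/- Let v, w be words, B ≤ min(|v|,|w|), and define blocks v_i = v[iB+1 : min((i+2)B,|v|)] and w_j = w[jB+1 : min((j+2)B,|w|)]. Then the length of the longest common B-subsequence of v and w equals the maximum over all pairs (i,j) of the length of the longest common B-subsequence of v_i and w_j. -/

import Mathlib

/-- An embedding of the string `u` into the string `w`: a strictly increasing map on
positions `0, ..., |u|-1` that is letter-preserving. -/
def IsEmbedding {α : Type*} (u w : List α) (e : ℕ → ℕ) : Prop :=
  StrictMonoOn e (Set.Iio u.length) ∧ ∀ i < u.length, w[e i]? = u[i]?

/-- The gap length `g` lies in the constraint interval `c = (ℓ, u)`. -/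
def inCon (g : ℕ) (c : ℕ × ℕ) : Prop := c.1 ≤ g ∧ g ≤ c.2

/-- Containment of constraint intervals: `(a,b) ⊆ (c,d)` iff `c ≤ a` and `b ≤ d`. -/
def ConSub (c d : ℕ × ℕ) : Prop := d.1 ≤ c.1 ∧ c.2 ≤ d.2

/-- The embedding `e` of a string of length `k` satisfies the tuple `C` of gap-length
constraints (0-indexed: `C i` constrains the gap between positions `i` and `i+1`). -/
def SatGaps (k : ℕ) (C : ℕ → ℕ × ℕ) (e : ℕ → ℕ) : Prop :=
  ∀ i, i + 1 < k → inCon (e (i + 1) - e i - 1) (C i)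

/-- `u` is a `C`-subsequence of `w`. -/
def CSubseq {α : Type*} (C : ℕ → ℕ × ℕ) (u w : List α) : Prop :=
  ∃ e : ℕ → ℕ, IsEmbedding u w e ∧ SatGaps u.length C e

def BSubseq {α : Type*} (B : ℕ) (s w : List α) : Prop :=
  ∃ i : ℕ, s.Sublist ((w.drop i).take B)

/-- `s` is a common `B`-subsequence of `v` and `w`. -/
def CommonB {α : Type*} (B : ℕ) (s v w : List α) : Prop :=
  BSubseq B s v ∧ BSubseq B s w

lemma block_to_full {α : Type*} {B : ℕ} {s v : List α} {m : ℕ}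
    (h : BSubseq B s ((v.drop m).take (2 * B))) : BSubseq B s v := by
  obtain ⟨a, ha⟩ := h
  refine ⟨m + a, ?_⟩
  rw [List.drop_take, List.drop_drop, List.take_take] at ha
  exact ha.trans (List.take_sublist_take_left (Nat.min_le_left _ _))

lemma full_to_block {α : Type*} {B : ℕ} {s v : List α} (hB1 : 1 ≤ B)
    (hs : s ≠ []) (h : BSubseq B s v) :
    ∃ i : ℕ, i * B < v.length ∧ BSubseq B s ((v.drop (i * B)).take (2 * B)) := by
  obtain ⟨m, hm⟩ := h
  have hmlt : m < v.length := by
    by_contra hc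
    push_neg at hc
    rw [List.drop_eq_nil_of_le hc] at hm
    simp at hm
    exact hs hm
  refine ⟨m / B, ?_, m % B, ?_⟩
  · calc m / B * B ≤ m := Nat.div_mul_le_self m B
      _ < v.length := hmlt
  · rw [List.drop_take, List.drop_drop, List.take_take]
    have h1 : m / B * B + m % B = m := Nat.div_add_mod' m B
    have h2 : m % B < B := Nat.mod_lt m hB1
    have h3 : B ≤ 2 * B - m % B := by omega
    rw [h1, Nat.min_eq_left h3]
    exact hm

theorem stmt12 {α : Type*} (v w : List α) (B : ℕ)
    (hB1 : 1 ≤ B) (hBv : B ≤ v.length) (hBw : B ≤ w.length) :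
    sSup {k | ∃ s : List α, s.length = k ∧ CommonB B s v w} =
      sSup {k | ∃ (i j : ℕ) (s : List α), i * B < v.length ∧ j * B < w.length ∧
        s.length = k ∧
        CommonB B s ((v.drop (i * B)).take (2 * B)) ((w.drop (j * B)).take (2 * B))} := by
  congr 1
  ext k
  constructor
  · rintro ⟨s, hsk, hsv, hsw⟩
    rcases eq_or_ne s [] with rfl | hs
    · exact ⟨0, 0, [], by simpa using Nat.lt_of_lt_of_le hB1 hBv,
        by simpa using Nat.lt_of_lt_of_le hB1 hBw, hsk,
        ⟨0, List.nil_sublist _⟩, ⟨0, List.nil_sublist _⟩⟩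
    · obtain ⟨i, hi, hbv⟩ := full_to_block hB1 hs hsv
      obtain ⟨j, hj, hbw⟩ := full_to_block hB1 hs hsw
      exact ⟨i, j, s, hi, hj, hsk, hbv, hbw⟩
  · rintro ⟨i, j, s, hi, hj, hsk, hsv, hsw⟩
    exact ⟨s, hsk, block_to_full hsv, block_to_full hsw⟩
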